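/- For all N ≥ 1 and all z_1,…,z_N ∈ ℂ with z_k = x_k + iy_k, the following exact identity holds: |Ψ_N(z_1,…,z_N)|² = (N!)^{−1}·(2πRℓ√π)^{−N}·∏_{1≤j<k≤N} |1 − exp((z_j − z_k)/R)|^{2p}·exp(−(1/ℓ²)·Σ_{k=1}^N (x_k − (k−1)·pℓ²/R)²). -/

import Mathlib

open MeasureTheory Filter Finset

noncomputable section

/-- The normalization constant `κ_N` of Laughlin's wave function. -/
def kappa (R ℓ : ℝ) (p N : ℕ) : ℝ :=
  (N.factorial : ℝ) ^ (-(1/2 : ℝ)) *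
    (2 * Real.pi * R * ℓ * Real.sqrt Real.pi) ^ (-(N : ℝ) / 2) *
    Real.exp (-((p : ℝ)^2 * (ℓ/R)^2 / 2) * ∑ j ∈ Finset.range N, (j : ℝ)^2)

/-- Laughlin's wave function on the cylinder of radius `R`, with magnetic length `ℓ`
and filling factor `1/p`. -/
def Psi (R ℓ : ℝ) (p N : ℕ) (z : Fin N → ℂ) : ℂ :=
  (kappa R ℓ p N : ℂ) *
    (∏ jk ∈ Finset.univ.filter (fun jk : Fin N × Fin N => jk.1 < jk.2),
      (Complex.exp (z jk.2 / (R : ℂ)) - Complex.exp (z jk.1 / (R : ℂ))) ^ p) *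
    ((Real.exp (-(1/(2*ℓ^2)) * ∑ k, (z k).re ^ 2) : ℝ) : ℂ)

/-- The infinite cylinder `𝒵 = ℝ × [0, 2πR]`, as a subset of `ℂ`. -/
def cylZ (R : ℝ) : Set ℂ := {z : ℂ | 0 ≤ z.im ∧ z.im ≤ 2 * Real.pi * R}

/-- `‖Ψ_N‖²_Λ`. -/
def normSqOn (R ℓ : ℝ) (p N : ℕ) (Λ : Set ℂ) : ℝ :=
  ∫ z : Fin N → ℂ, ‖Psi R ℓ p N z‖ ^ 2
    ∂(Measure.pi fun _ : Fin N => volume.restrict Λ)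

/-- `C_N = ‖Ψ_N‖²_𝒵`. -/
def CN (R ℓ : ℝ) (p : ℕ) (N : ℕ) : ℝ := normSqOn R ℓ p N (cylZ R)

lemma pair_sum {N : ℕ} (f : Fin N → ℝ) :
    ∑ jk ∈ Finset.univ.filter (fun jk : Fin N × Fin N => jk.1 < jk.2), f jk.2
      = ∑ k : Fin N, (k : ℕ) * f k := by
  rw [Finset.sum_filter, ← Finset.univ_product_univ, Finset.sum_product]
  rw [Finset.sum_comm]
  refine Finset.sum_congr rfl fun k _ => ?_
  rw [← Finset.sum_filter]
  have h : Finset.univ.filter (fun j : Fin N => j < k) = Finset.Iio k := by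
    ext j; simp
  rw [h]
  simp [Finset.sum_const, Fin.card_Iio]


/-- The exact alternative form of `|Ψ_N|²`, exhibiting the period `pℓ²/R` of the
Gaussian along the cylinder axis. -/
theorem Psi_abs_sq_eq (R ℓ : ℝ) (hR : 0 < R) (hl : 0 < ℓ)
    (p : ℕ) (hp : 1 ≤ p) (N : ℕ) (hN : 1 ≤ N) (z : Fin N → ℂ) :
    ‖Psi R ℓ p N z‖ ^ 2 =
      (N.factorial : ℝ)⁻¹ * ((2 * Real.pi * R * ℓ * Real.sqrt Real.pi) ^ N)⁻¹ *
        (∏ jk ∈ Finset.univ.filter (fun jk : Fin N × Fin N => jk.1 < jk.2),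
          ‖1 - Complex.exp ((z jk.1 - z jk.2) / (R : ℂ))‖ ^ (2 * p)) *
        Real.exp (-(1/ℓ^2) *
          ∑ k : Fin N, ((z k).re - ((k : ℕ) : ℝ) * ((p : ℝ) * ℓ^2 / R)) ^ 2) := by
  have hRC : (R : ℂ) ≠ 0 := Complex.ofReal_ne_zero.mpr hR.ne'
  set F := Finset.univ.filter (fun jk : Fin N × Fin N => jk.1 < jk.2) with hF
  -- factorization of each pair factor
  have hfac : ∀ jk : Fin N × Fin N,
      Complex.exp (z jk.2 / (R:ℂ)) - Complex.exp (z jk.1 / (R:ℂ))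
        = Complex.exp (z jk.2 / (R:ℂ)) * (1 - Complex.exp ((z jk.1 - z jk.2) / (R:ℂ))) := by
    intro jk
    rw [mul_sub, mul_one, ← Complex.exp_add]
    congr 1
    field_simp
    ring_nf
  have habs1 : ∀ jk : Fin N × Fin N,
      ‖Complex.exp (z jk.2 / (R:ℂ)) - Complex.exp (z jk.1 / (R:ℂ))‖
        = Real.exp ((z jk.2).re / R) *
          ‖1 - Complex.exp ((z jk.1 - z jk.2) / (R:ℂ))‖ := by
    intro jk
    rw [hfac jk, norm_mul, Complex.norm_exp, Complex.div_ofReal_re]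
  have hk : 0 < kappa R ℓ p N := by unfold kappa; positivity
  -- Step 1 : abs of Psi
  have step1 : ‖Psi R ℓ p N z‖
      = kappa R ℓ p N
        * (Real.exp ((∑ jk ∈ F, (z jk.2).re) / R) *
            ∏ jk ∈ F, ‖1 - Complex.exp ((z jk.1 - z jk.2) / (R:ℂ))‖) ^ p
        * Real.exp (-(1/(2*ℓ^2)) * ∑ k, (z k).re ^ 2) := by
    unfold Psi
    rw [norm_mul, norm_mul, Complex.norm_real, Complex.norm_real, Real.norm_eq_abs, Real.norm_eq_abs,
        abs_of_pos hk, abs_of_pos (Real.exp_pos _), norm_prod]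
    congr 2
    calc ∏ jk ∈ F, ‖(Complex.exp (z jk.2/(R:ℂ)) - Complex.exp (z jk.1/(R:ℂ)))^p‖
        = ∏ jk ∈ F, (Real.exp ((z jk.2).re / R) *
            ‖1 - Complex.exp ((z jk.1 - z jk.2) / (R:ℂ))‖) ^ p := by
          refine Finset.prod_congr rfl fun jk _ => ?_
          rw [norm_pow, habs1 jk]
      _ = (∏ jk ∈ F, Real.exp ((z jk.2).re / R) *
            ‖1 - Complex.exp ((z jk.1 - z jk.2) / (R:ℂ))‖) ^ p :=
          Finset.prod_pow _ _ _
      _ = _ := by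
          rw [Finset.prod_mul_distrib, ← Real.exp_sum, ← Finset.sum_div]
  -- exponent identity
  have hexp : -(1/ℓ^2) *
        ∑ k : Fin N, ((z k).re - ((k : ℕ) : ℝ) * ((p : ℝ) * ℓ^2 / R)) ^ 2
      = ((2*p : ℕ) : ℝ) * ((∑ jk ∈ F, (z jk.2).re) / R)
        + (-((p : ℝ)^2 * (ℓ/R)^2 / 2) * ∑ j ∈ Finset.range N, (j : ℝ)^2
            + -((p : ℝ)^2 * (ℓ/R)^2 / 2) * ∑ j ∈ Finset.range N, (j : ℝ)^2)
        + (-(1/(2*ℓ^2)) * ∑ k, (z k).re ^ 2 + -(1/(2*ℓ^2)) * ∑ k, (z k).re ^ 2) := by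
    rw [pair_sum (fun k => (z k).re),
        ← Fin.sum_univ_eq_sum_range (fun j => (j:ℝ)^2)]
    have hterm : ∀ k : Fin N,
        -(1/ℓ^2) * ((z k).re - ((k : ℕ) : ℝ) * ((p : ℝ) * ℓ^2 / R)) ^ 2
          = (2*(p:ℝ)/R) * (((k:ℕ):ℝ) * (z k).re)
            + (-((p : ℝ)^2 * (ℓ/R)^2)) * ((k:ℕ):ℝ)^2
            + (-(1/ℓ^2)) * (z k).re ^ 2 := by
      intro k
      field_simp
      ring
    rw [Finset.mul_sum]
    rw [Finset.sum_congr rfl fun k _ => hterm k]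
    rw [Finset.sum_add_distrib, Finset.sum_add_distrib,
        ← Finset.mul_sum, ← Finset.mul_sum, ← Finset.mul_sum]
    push_cast
    field_simp
    ring
  -- the two rpow squares
  have hc1 : (((N.factorial : ℝ)) ^ (-(1/2 : ℝ)))^2 = (N.factorial : ℝ)⁻¹ := by
    have h0 : (0:ℝ) < N.factorial := by positivity
    rw [← Real.rpow_natCast ((N.factorial:ℝ) ^ (-(1/2:ℝ))) 2, ← Real.rpow_mul h0.le]
    norm_num [Real.rpow_neg_one]
  have hb : (0:ℝ) < 2 * Real.pi * R * ℓ * Real.sqrt Real.pi := by positivity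
  have hc2 : ((2 * Real.pi * R * ℓ * Real.sqrt Real.pi) ^ (-(N : ℝ) / 2))^2
      = ((2 * Real.pi * R * ℓ * Real.sqrt Real.pi) ^ N)⁻¹ := by
    rw [← Real.rpow_natCast ((2 * Real.pi * R * ℓ * Real.sqrt Real.pi) ^ (-(N : ℝ) / 2)) 2,
        ← Real.rpow_mul hb.le]
    have h2 : (-(N:ℝ)/2) * ((2:ℕ):ℝ) = -(N:ℝ) := by push_cast; ring
    rw [h2, Real.rpow_neg hb.le, Real.rpow_natCast]
  have hP : (∏ jk ∈ F, ‖1 - Complex.exp ((z jk.1 - z jk.2) / (R:ℂ))‖ ^ (2*p))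
      = (∏ jk ∈ F, ‖1 - Complex.exp ((z jk.1 - z jk.2) / (R:ℂ))‖)^(2*p) :=
    Finset.prod_pow _ _ _
  rw [step1, hexp]
  simp only [Real.exp_add, Real.exp_nat_mul]
  rw [hP, ← hc1, ← hc2]
  unfold kappa
  ring
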